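/- Every finite simple graph G with minimum degree at least 1 and at least 4 vertices that is not a star has a (δ≥1, δ≥1)-partition. -/
import Mathlib


/-- A `(δ ≥ k₁, δ ≥ k₂)`-partition of a graph `G`: a partition of the vertex set into
two disjoint nonempty sets `V₁, V₂` covering all vertices such that the induced subgraph
`G[Vᵢ]` has minimum degree at least `kᵢ` for `i = 1, 2`. -/
def HasMinDegPartition {V : Type*} (G : SimpleGraph V) (k1 k2 : ℕ) : Prop :=
  ∃ V1 V2 : Set V, V1.Nonempty ∧ V2.Nonempty ∧ Disjoint V1 V2 ∧ V1 ∪ V2 = Set.univ ∧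
    (∀ v ∈ V1, k1 ≤ (V1 ∩ G.neighborSet v).ncard) ∧
    (∀ v ∈ V2, k2 ≤ (V2 ∩ G.neighborSet v).ncard)

/-- `G` is a star: some center vertex is adjacent to all other vertices and
there are no other edges. -/
def IsStar {V : Type*} (G : SimpleGraph V) : Prop :=
  ∃ c : V, (∀ v : V, v ≠ c → G.Adj c v) ∧ ∀ u v : V, G.Adj u v → u = c ∨ v = c

lemma exists_two_disjoint_edges {V : Type*} [Fintype V] (G : SimpleGraph V)
    (hcard : 4 ≤ Fintype.card V)
    (hdeg : ∀ v : V, 1 ≤ (G.neighborSet v).ncard)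
    (hstar : ¬ IsStar G) :
    ∃ a b c d : V, G.Adj a b ∧ G.Adj c d ∧ a ≠ c ∧ a ≠ d ∧ b ≠ c ∧ b ≠ d := by
  classical
  have hne : ∀ v : V, ∃ w, G.Adj v w := by
    intro v
    have h := hdeg v
    have hne : (G.neighborSet v).Nonempty := Set.nonempty_of_ncard_ne_zero (by omega)
    obtain ⟨w, hw⟩ := hne
    exact ⟨w, hw⟩
  have star_of : ∀ x : V, (∀ u v, G.Adj u v → u = x ∨ v = x) → False := by
    intro x hx
    apply hstar
    refine ⟨x, ?_, hx⟩
    intro v hv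
    obtain ⟨w, hw⟩ := hne v
    rcases hx v w hw with h | h
    · exact absurd h hv
    · subst h; exact hw.symm
  obtain ⟨a⟩ : Nonempty V := Fintype.card_pos_iff.mp (by omega)
  obtain ⟨b, hab⟩ := hne a
  -- there is an edge avoiding a
  have hEa : ∃ u v, G.Adj u v ∧ u ≠ a ∧ v ≠ a := by
    by_contra h
    push_neg at h
    refine star_of a (fun u v huv => ?_)
    by_cases hu : u = a
    · exact Or.inl hu
    · exact Or.inr (h u v huv hu)
  have hEb : ∃ u v, G.Adj u v ∧ u ≠ b ∧ v ≠ b := by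
    by_contra h
    push_neg at h
    refine star_of b (fun u v huv => ?_)
    by_cases hu : u = b
    · exact Or.inl hu
    · exact Or.inr (h u v huv hu)
  -- Either we find an edge avoiding both a and b, or edges b-x (x≠a) and a-y (y≠b)
  have stepA : (∃ u v, G.Adj u v ∧ u ≠ a ∧ v ≠ a ∧ u ≠ b ∧ v ≠ b) ∨
      (∃ x, G.Adj b x ∧ x ≠ a) := by
    obtain ⟨u, v, huv, hua, hva⟩ := hEa
    by_cases hub : u = b
    · exact Or.inr ⟨v, hub ▸ huv, hva⟩
    · by_cases hvb : v = b
      · exact Or.inr ⟨u, (hvb ▸ huv).symm, hua⟩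
      · exact Or.inl ⟨u, v, huv, hua, hva, hub, hvb⟩
  have stepB : (∃ u v, G.Adj u v ∧ u ≠ a ∧ v ≠ a ∧ u ≠ b ∧ v ≠ b) ∨
      (∃ y, G.Adj a y ∧ y ≠ b) := by
    obtain ⟨u, v, huv, hub, hvb⟩ := hEb
    by_cases hua : u = a
    · exact Or.inr ⟨v, hua ▸ huv, hvb⟩
    · by_cases hva : v = a
      · exact Or.inr ⟨u, (hva ▸ huv).symm, hub⟩
      · exact Or.inl ⟨u, v, huv, hua, hva, hub, hvb⟩
  have done_of : (∃ u v, G.Adj u v ∧ u ≠ a ∧ v ≠ a ∧ u ≠ b ∧ v ≠ b) →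
      ∃ a' b' c' d' : V, G.Adj a' b' ∧ G.Adj c' d' ∧ a' ≠ c' ∧ a' ≠ d' ∧ b' ≠ c' ∧ b' ≠ d' := by
    rintro ⟨u, v, huv, hua, hva, hub, hvb⟩
    exact ⟨a, b, u, v, hab, huv, Ne.symm hua, Ne.symm hva, Ne.symm hub, Ne.symm hvb⟩
  rcases stepA with h | ⟨x, hbx, hxa⟩
  · exact done_of h
  rcases stepB with h | ⟨y, hay, hyb⟩
  · exact done_of h
  by_cases hxy : x ≠ y
  · -- edges a-y and b-x are disjoint
    exact ⟨a, y, b, x, hay, hbx, hab.ne, Ne.symm hxa, hyb, Ne.symm hxy⟩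
  push_neg at hxy
  subst hxy
  -- triangle a, b, x; find w outside
  have hw : ∃ w : V, w ≠ a ∧ w ≠ b ∧ w ≠ x := by
    have h3 : ({a, b, x} : Finset V).card ≤ 3 := by
      apply le_trans (Finset.card_insert_le _ _)
      have := Finset.card_insert_le b ({x} : Finset V)
      simp at this ⊢
      omega
    by_contra h
    push_neg at h
    have hsub : (Finset.univ : Finset V) ⊆ {a, b, x} := by
      intro w _
      simp only [Finset.mem_insert, Finset.mem_singleton]
      by_cases h1 : w = a
      · exact Or.inl h1
      by_cases h2 : w = b
      · exact Or.inr (Or.inl h2)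
      · exact Or.inr (Or.inr (h w h1 h2))
    have hle := Finset.card_le_card hsub
    rw [Finset.card_univ] at hle
    omega
  obtain ⟨w, hwa, hwb, hwx⟩ := hw
  obtain ⟨z, hwz⟩ := hne w
  by_cases hza : z = a
  · subst hza
    exact ⟨w, z, b, x, hwz, hbx, hwb, hwx, hab.ne, Ne.symm hxa⟩
  by_cases hzb : z = b
  · subst hzb
    exact ⟨w, z, a, x, hwz, hay, hwa, hwx, hab.ne', hbx.ne⟩
  · exact ⟨w, z, a, b, hwz, hab, hwa, hwb, hza, hzb⟩

/-- Every finite graph with minimum degree at least 1 and at least 4 vertices which is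
not a star has a `(δ ≥ 1, δ ≥ 1)`-partition. -/
theorem one_one_partition {V : Type*} [Fintype V] (G : SimpleGraph V)
    (hcard : 4 ≤ Fintype.card V)
    (hdeg : ∀ v : V, 1 ≤ (G.neighborSet v).ncard)
    (hstar : ¬ IsStar G) :
    HasMinDegPartition G 1 1 := by
  classical
  obtain ⟨a, b, c, d, hab, hcd, hac, had, hbc, hbd⟩ :=
    exists_two_disjoint_edges G hcard hdeg hstar
  set P : Finset V → Prop := fun A =>
    a ∈ A ∧ b ∈ A ∧ c ∉ A ∧ d ∉ A ∧ ∀ v ∈ A, ∃ w ∈ A, G.Adj v w with hP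
  have hP0 : P {a, b} := by
    refine ⟨by simp, by simp, ?_, ?_, ?_⟩
    · simp only [Finset.mem_insert, Finset.mem_singleton, not_or]
      exact ⟨Ne.symm hac, Ne.symm hbc⟩
    · simp only [Finset.mem_insert, Finset.mem_singleton, not_or]
      exact ⟨Ne.symm had, Ne.symm hbd⟩
    · intro v hv
      simp only [Finset.mem_insert, Finset.mem_singleton] at hv
      rcases hv with rfl | rfl
      · exact ⟨b, by simp, hab⟩
      · exact ⟨a, by simp, hab.symm⟩
  have hS : (Finset.univ.filter P : Finset (Finset V)).Nonempty :=
    ⟨{a, b}, Finset.mem_filter.mpr ⟨Finset.mem_univ _, hP0⟩⟩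
  obtain ⟨A, hAmem, hAmax⟩ := Finset.exists_max_image (Finset.univ.filter P)
    (fun A => A.card) hS
  rw [Finset.mem_filter] at hAmem
  have hA : P A := hAmem.2
  obtain ⟨haA, hbA, hcA, hdA, hnbr⟩ := hA
  -- every vertex outside A has a neighbor outside A
  have key : ∀ v, v ∉ A → ∃ w, w ∉ A ∧ G.Adj v w := by
    intro v hv
    by_cases hvc : v = c
    · exact ⟨d, hdA, hvc ▸ hcd⟩
    by_cases hvd : v = d
    · exact ⟨c, hcA, hvd ▸ hcd.symm⟩
    by_contra h
    push_neg at h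
    have hPins : P (insert v A) := by
      refine ⟨Finset.mem_insert_of_mem haA, Finset.mem_insert_of_mem hbA, ?_, ?_, ?_⟩
      · simp only [Finset.mem_insert, not_or]
        exact ⟨fun hh => hvc hh.symm, hcA⟩
      · simp only [Finset.mem_insert, not_or]
        exact ⟨fun hh => hvd hh.symm, hdA⟩
      · intro u hu
        rcases Finset.mem_insert.mp hu with rfl | huA
        · obtain ⟨w, hw⟩ := (by
            have h1 := hdeg u
            exact Set.nonempty_of_ncard_ne_zero (by omega) : (G.neighborSet u).Nonempty)
          refine ⟨w, Finset.mem_insert_of_mem ?_, hw⟩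
          by_contra hwA
          exact h w hwA hw
        · obtain ⟨w, hwA, hw⟩ := hnbr u huA
          exact ⟨w, Finset.mem_insert_of_mem hwA, hw⟩
    have hle := hAmax (insert v A) (Finset.mem_filter.mpr ⟨Finset.mem_univ _, hPins⟩)
    rw [Finset.card_insert_of_notMem hv] at hle
    omega
  refine ⟨(↑A : Set V), (↑A : Set V)ᶜ, ⟨a, haA⟩, ⟨c, hcA⟩, disjoint_compl_right,
    Set.union_compl_self _, ?_, ?_⟩
  · intro v hv
    obtain ⟨w, hwA, hw⟩ := hnbr v hv
    have : ((↑A : Set V) ∩ G.neighborSet v).Nonempty := ⟨w, hwA, hw⟩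
    have := (Set.ncard_pos (Set.toFinite _)).mpr this
    omega
  · intro v hv
    obtain ⟨w, hwA, hw⟩ := key v hv
    have : ((↑A : Set V)ᶜ ∩ G.neighborSet v).Nonempty := ⟨w, hwA, hw⟩
    have := (Set.ncard_pos (Set.toFinite _)).mpr this
    omega
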